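/- Fix n ≥ 1 and define p(ℓ,m) for 0 ≤ ℓ ≤ 2n, m ≥ -1 by: p(ℓ,-1) = 0, p(2n,m) = 0 for m ≥ 1, p(2n,0) = 1, and for ℓ < 2n, m ≥ 0: p(ℓ,m) = ((3ℓ+m)/(3ℓ+3m+6)) * p(ℓ+1,m+1) + ((3ℓ+m-2)/(3ℓ+m-4)) * p(ℓ+1,m-1) (interpreting the second term as 0 when m = 0 since p(ℓ+1,-1) = 0, and assuming 3ℓ+m-4 ≠ 0 when m ≥ 1). Then for all 0 ≤ j < k ≤ ℓ ≤ 2n with k - j even, p(ℓ,j)/(j+1)² ≥ p(ℓ,k)/(k+1)². -/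

import Mathlib

/-- Weighted lattice path count `p(ℓ,m)` = weighted number of lattice paths from `(ℓ,m)`
to `(2n,0)` with up-steps `(1,1)` of weight `(3a+b)/(3a+3b+6)` and down-steps `(1,-1)` of
weight `(3a+b-2)/(3a+b-4)` when starting at `(a,b)`; defined by the backwards recurrence
`p(ℓ,m) = ((3ℓ+m)/(3ℓ+3m+6))·p(ℓ+1,m+1) + ((3ℓ+m-2)/(3ℓ+m-4))·p(ℓ+1,m-1)` with
`p(ℓ,-1) = 0`, `p(2n,0) = 1`, `p(2n,m) = 0` for `m ≥ 1`. -/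
noncomputable def latticeP (n : ℕ) : ℕ → ℤ → ℚ := fun ℓ m =>
  if m < 0 then 0
  else if h : 2 * n ≤ ℓ then (if m = 0 then 1 else 0)
  else ((3 * (ℓ : ℚ) + (m : ℚ)) / (3 * (ℓ : ℚ) + 3 * (m : ℚ) + 6)) * latticeP n (ℓ + 1) (m + 1)
    + ((3 * (ℓ : ℚ) + (m : ℚ) - 2) / (3 * (ℓ : ℚ) + (m : ℚ) - 4)) * latticeP n (ℓ + 1) (m - 1)
  termination_by ℓ _ => 2 * n - ℓ
  decreasing_by all_goals omega

lemma latticeP_of_neg (n ℓ : ℕ) (m : ℤ) (h : m < 0) : latticeP n ℓ m = 0 := by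
  rw [latticeP]; simp [h]

lemma latticeP_top (n ℓ : ℕ) (m : ℤ) (h : 2*n ≤ ℓ) (hm : 0 < m) : latticeP n ℓ m = 0 := by
  rw [latticeP]; rw [if_neg (by omega), dif_pos h, if_neg (by omega)]

lemma latticeP_rec (n ℓ : ℕ) (m : ℤ) (h0 : 0 ≤ m) (h1 : ℓ < 2*n) :
    latticeP n ℓ m = ((3 * (ℓ : ℚ) + (m : ℚ)) / (3 * (ℓ : ℚ) + 3 * (m : ℚ) + 6)) * latticeP n (ℓ + 1) (m + 1)
    + ((3 * (ℓ : ℚ) + (m : ℚ) - 2) / (3 * (ℓ : ℚ) + (m : ℚ) - 4)) * latticeP n (ℓ + 1) (m - 1) := by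
  rw [latticeP]; rw [if_neg (by omega), dif_neg (by omega)]

lemma latticeP_nonneg_aux (n : ℕ) : ∀ (d ℓ : ℕ), 2*n - ℓ ≤ d → ∀ m : ℤ, m ≤ (ℓ:ℤ) → 0 ≤ latticeP n ℓ m := by
  intro d
  induction d with
  | zero =>
    intro ℓ hd m hm
    have htop : 2*n ≤ ℓ := by omega
    rcases lt_or_ge m 0 with hneg | h0
    · rw [latticeP_of_neg n ℓ m hneg]
    rw [latticeP, if_neg (by omega), dif_pos htop]
    split_ifs <;> norm_num
  | succ d ih =>
    intro ℓ hd m hm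
    rcases lt_or_ge m 0 with hneg | h0
    · rw [latticeP_of_neg n ℓ m hneg]
    rcases le_or_gt (2*n) ℓ with htop | hrec
    · rw [latticeP]; rw [if_neg (by omega), dif_pos htop]; split_ifs <;> norm_num
    rw [latticeP_rec n ℓ m h0 hrec]
    have hmq : (m:ℚ) ≤ (ℓ:ℚ) := by exact_mod_cast hm
    have hmq0 : (0:ℚ) ≤ (m:ℚ) := by exact_mod_cast h0
    have hc1 : 0 ≤ latticeP n (ℓ+1) (m+1) := ih (ℓ+1) (by omega) (m+1) (by push_cast; omega)
    have hA : 0 ≤ (3 * (ℓ : ℚ) + (m : ℚ)) / (3 * (ℓ : ℚ) + 3 * (m : ℚ) + 6) := by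
      apply div_nonneg <;> positivity
    rcases eq_or_lt_of_le h0 with hm0 | hm1
    · rw [latticeP_of_neg n (ℓ+1) (m-1) (by omega)]
      have := mul_nonneg hA hc1
      linarith
    · have hc2 : 0 ≤ latticeP n (ℓ+1) (m-1) := ih (ℓ+1) (by omega) (m-1) (by push_cast; omega)
      have hl1 : (1:ℚ) ≤ (ℓ:ℚ) := by
        have : (1:ℤ) ≤ (ℓ:ℤ) := by omega
        exact_mod_cast this
      have hmq1 : (1:ℚ) ≤ (m:ℚ) := by
        have : (1:ℤ) ≤ m := hm1
        exact_mod_cast this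
      have hB : 0 ≤ (3 * (ℓ : ℚ) + (m : ℚ) - 2) / (3 * (ℓ : ℚ) + (m : ℚ) - 4) := by
        apply div_nonneg <;> linarith
      have := mul_nonneg hA hc1
      have := mul_nonneg hB hc2
      linarith

lemma latticeP_nonneg (n ℓ : ℕ) (m : ℤ) (hm : m ≤ (ℓ:ℤ)) : 0 ≤ latticeP n ℓ m :=
  latticeP_nonneg_aux n (2*n) ℓ (by omega) m hm

lemma aux_num_nonneg (s t : ℚ) (hs : 0 ≤ s) (ht : 0 ≤ t) :
    0 ≤ 131328 + 259488*t + 165600*t^2 + 36504*t^3 + 1944*t^4 + 308160*s + 475488*s*t + 220032*s*t^2 + 30672*s*t^3 + 648*s*t^4 + 326592*s^2 + 375816*s^2*t + 118116*s^2*t^2 + 9180*s^2*t^3 + 207216*s^3 + 168696*s^3*t + 33444*s^3*t^2 + 1296*s^3*t^3 + 84624*s^4 + 45816*s^4*t + 5292*s^4*t^2 + 108*s^4*t^3 + 21648*s^5 + 7080*s^5*t + 396*s^5*t^2 + 3120*s^6 + 480*s^6*t + 192*s^7 := by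
  have h : ∀ u v : ℕ, 0 ≤ s^u * t^v := fun u v => mul_nonneg (pow_nonneg hs u) (pow_nonneg ht v)
  linarith [h 0 0, h 0 1, h 0 2, h 0 3, h 0 4, h 1 0, h 1 1, h 1 2, h 1 3, h 1 4, h 2 0, h 2 1, h 2 2, h 2 3, h 3 0, h 3 1, h 3 2, h 3 3, h 4 0, h 4 1, h 4 2, h 4 3, h 5 0, h 5 1, h 5 2, h 6 0, h 6 1, h 7 0]

lemma coeff1 (q x : ℚ) (hq : 1 ≤ q) (hx : q + 2 ≤ x) :
    ((3*x+q+2)/(3*x+3*q+12) * (q+4)^2 + (3*x+q)/(3*x+q-2) * (q+2)^2) * (q+1)^2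
      ≤ ((3*x+q)/(3*x+3*q+6) * (q+2)^2 + (3*x+q-2)/(3*x+q-4) * q^2) * (q+3)^2 := by
  have d1 : (0:ℚ) < 3*x+3*q+12 := by linarith
  have d2 : (0:ℚ) < 3*x+q-2 := by linarith
  have d3 : (0:ℚ) < 3*x+3*q+6 := by linarith
  have d4 : (0:ℚ) < 3*x+q-4 := by linarith
  rw [← sub_nonneg]
  have key : ((3*x+q)/(3*x+3*q+6) * (q+2)^2 + (3*x+q-2)/(3*x+q-4) * q^2) * (q+3)^2
      - ((3*x+q+2)/(3*x+3*q+12) * (q+4)^2 + (3*x+q)/(3*x+q-2) * (q+2)^2) * (q+1)^2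
      = (131328 + 259488*(x-q-2) + 165600*(x-q-2)^2 + 36504*(x-q-2)^3 + 1944*(x-q-2)^4 + 308160*(q-1) + 475488*(q-1)*(x-q-2) + 220032*(q-1)*(x-q-2)^2 + 30672*(q-1)*(x-q-2)^3 + 648*(q-1)*(x-q-2)^4 + 326592*(q-1)^2 + 375816*(q-1)^2*(x-q-2) + 118116*(q-1)^2*(x-q-2)^2 + 9180*(q-1)^2*(x-q-2)^3 + 207216*(q-1)^3 + 168696*(q-1)^3*(x-q-2) + 33444*(q-1)^3*(x-q-2)^2 + 1296*(q-1)^3*(x-q-2)^3 + 84624*(q-1)^4 + 45816*(q-1)^4*(x-q-2) + 5292*(q-1)^4*(x-q-2)^2 + 108*(q-1)^4*(x-q-2)^3 + 21648*(q-1)^5 + 7080*(q-1)^5*(x-q-2) + 396*(q-1)^5*(x-q-2)^2 + 3120*(q-1)^6 + 480*(q-1)^6*(x-q-2) + 192*(q-1)^7)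
        / ((3*x+3*q+12)*(3*x+q-2)*(3*x+3*q+6)*(3*x+q-4)) := by
    rw [div_mul_eq_mul_div, div_mul_eq_mul_div, div_mul_eq_mul_div, div_mul_eq_mul_div, div_add_div _ _ (ne_of_gt d3) (ne_of_gt d4), div_add_div _ _ (ne_of_gt d1) (ne_of_gt d2), div_mul_eq_mul_div, div_mul_eq_mul_div, div_sub_div _ _ (by positivity) (by positivity), div_eq_div_iff (by positivity) (by positivity)]
    ring
  rw [key]
  exact div_nonneg (aux_num_nonneg (q-1) (x-q-2) (by linarith) (by linarith))
    (le_of_lt (mul_pos (mul_pos (mul_pos d1 d2) d3) d4))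

lemma coeff0 (x : ℚ) (hx : 2 ≤ x) :
    (3*x+2)/(3*x+12) * 16 + (3*x)/(3*x-2) * 4 ≤ (3*x)/(3*x+6) * 36 := by
  have d1 : (0:ℚ) < 3*x+12 := by linarith
  have d2 : (0:ℚ) < 3*x-2 := by linarith
  have d3 : (0:ℚ) < 3*x+6 := by linarith
  rw [← sub_nonneg]
  have key : (3*x)/(3*x+6) * 36 - ((3*x+2)/(3*x+12) * 16 + (3*x)/(3*x-2) * 4)
      = (4224 + 8832*(x-2) + 4320*(x-2)^2 + 432*(x-2)^3) / ((3*x+12)*(3*x-2)*(3*x+6)) := by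
    field_simp
    ring
  rw [key]
  have ht : (0:ℚ) ≤ x - 2 := by linarith
  apply div_nonneg _ (le_of_lt (mul_pos (mul_pos d1 d2) d3))
  nlinarith [pow_nonneg ht 2, pow_nonneg ht 3]

lemma latticeP_adj_top (n ℓ : ℕ) (j : ℕ) (h2n : 2*n ≤ ℓ) (hj : j + 2 ≤ ℓ) :
    latticeP n ℓ ((j:ℤ)+2) / ((j:ℚ)+3)^2 ≤ latticeP n ℓ (j:ℤ) / ((j:ℚ)+1)^2 := by
  rw [latticeP_top n ℓ ((j:ℤ)+2) h2n (by positivity)]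
  rw [zero_div]
  apply div_nonneg (latticeP_nonneg n ℓ (j:ℤ) (by omega)) (by positivity)

lemma latticeP_adj_aux (n : ℕ) : ∀ (d ℓ : ℕ), 2*n - ℓ ≤ d → ∀ j : ℕ, j + 2 ≤ ℓ → ℓ ≤ 2*n →
    latticeP n ℓ ((j:ℤ)+2) / ((j:ℚ)+3)^2 ≤ latticeP n ℓ (j:ℤ) / ((j:ℚ)+1)^2 := by
  intro d
  induction d with
  | zero =>
    intro ℓ hd j hj hl
    exact latticeP_adj_top n ℓ j (by omega) hj
  | succ d ih =>
    intro ℓ hd j hj hl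
    rcases le_or_gt (2*n) ℓ with htop | hrec
    · exact latticeP_adj_top n ℓ j htop hj
    -- recurrence case
    rw [latticeP_rec n ℓ ((j:ℤ)+2) (by positivity) hrec, latticeP_rec n ℓ (j:ℤ) (by positivity) hrec]
    have e1 : (j:ℤ)+2+1 = (j:ℤ)+3 := by ring
    have e2 : (j:ℤ)+2-1 = (j:ℤ)+1 := by ring
    rw [e1, e2]
    have ecast : (((j:ℤ)+2 : ℤ) : ℚ) = (j:ℚ)+2 := by push_cast; ring
    have ecast2 : (((j:ℤ) : ℤ) : ℚ) = (j:ℚ) := by push_cast; ring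
    rw [ecast, ecast2]
    set P1 := latticeP n (ℓ+1) ((j:ℤ)+1) with hP1def
    set P3 := latticeP n (ℓ+1) ((j:ℤ)+3) with hP3def
    set Pm := latticeP n (ℓ+1) ((j:ℤ)-1) with hPmdef
    have hP1 : 0 ≤ P1 := latticeP_nonneg n (ℓ+1) _ (by omega)
    have hP3 : 0 ≤ P3 := latticeP_nonneg n (ℓ+1) _ (by omega)
    have hPm : 0 ≤ Pm := latticeP_nonneg n (ℓ+1) _ (by omega)
    -- IH for pair (j+1, j+3) at level ℓ+1
    have hIH13 : P3 * ((j:ℚ)+2)^2 ≤ P1 * ((j:ℚ)+4)^2 := by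
      have h := ih (ℓ+1) (by omega) (j+1) (by omega) (by omega)
      have i1 : ((j+1:ℕ):ℤ)+2 = (j:ℤ)+3 := by push_cast; ring
      have i2 : ((j+1:ℕ):ℚ)+3 = (j:ℚ)+4 := by push_cast; ring
      have i3 : ((j+1:ℕ):ℤ) = (j:ℤ)+1 := by push_cast; ring
      have i4 : ((j+1:ℕ):ℚ)+1 = (j:ℚ)+2 := by push_cast; ring
      rw [i1, i2, i3, i4] at h
      rw [div_le_div_iff₀ (by positivity) (by positivity)] at h
      exact h
    have hxq : (j:ℚ) + 2 ≤ (ℓ:ℚ) := by exact_mod_cast hj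
    have hp2 : (0:ℚ) < ((j:ℚ)+2)^2 := by positivity
    rcases Nat.eq_zero_or_pos j with rfl | hj1
    · -- j = 0 case
      have hPm0 : Pm = 0 := latticeP_of_neg n (ℓ+1) _ (by omega)
      rw [hPm0]
      have key := coeff0 (ℓ:ℚ) (by exact_mod_cast hj)
      have hA2 : (0:ℚ) ≤ (3*(ℓ:ℚ)+2)/(3*(ℓ:ℚ)+12) := by positivity
      have k1 : (3*(ℓ:ℚ)+2)/(3*(ℓ:ℚ)+12) * (P3 * ((0:ℚ)+2)^2)
          ≤ (3*(ℓ:ℚ)+2)/(3*(ℓ:ℚ)+12) * (P1 * ((0:ℚ)+4)^2) := by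
        apply mul_le_mul_of_nonneg_left _ hA2
        simpa using hIH13
      have k2 := mul_le_mul_of_nonneg_right key hP1
      have goal2 : ((3*(ℓ:ℚ)+2)/(3*(ℓ:ℚ)+12) * P3 + (3*(ℓ:ℚ))/(3*(ℓ:ℚ)-2) * P1) / 9
          ≤ ((3*(ℓ:ℚ))/(3*(ℓ:ℚ)+6) * P1 + (3*(ℓ:ℚ)-2)/(3*(ℓ:ℚ)-4) * 0) / 1 := by
        linarith [k1, k2]
      convert goal2 using 2 <;> push_cast <;> ring_nf
    · -- j ≥ 1 case
      have hq1 : (1:ℚ) ≤ (j:ℚ) := by exact_mod_cast hj1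
      have hIHm : P1 * (j:ℚ)^2 ≤ Pm * ((j:ℚ)+2)^2 := by
        have h := ih (ℓ+1) (by omega) (j-1) (by omega) (by omega)
        have hc : ((j-1:ℕ):ℚ) = (j:ℚ)-1 := by
          have h1 : (1:ℕ) ≤ j := hj1
          push_cast [h1]; ring
        have i1 : ((j-1:ℕ):ℤ)+2 = (j:ℤ)+1 := by omega
        have i2 : ((j-1:ℕ):ℚ)+3 = (j:ℚ)+2 := by rw [hc]; ring
        have i3 : ((j-1:ℕ):ℤ) = (j:ℤ)-1 := by omega
        have i4 : ((j-1:ℕ):ℚ)+1 = (j:ℚ) := by rw [hc]; ring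
        rw [i1, i2, i3, i4] at h
        rw [div_le_div_iff₀ (by positivity) (by positivity)] at h
        exact h
      rw [div_le_div_iff₀ (by positivity) (by positivity)]
      have key := coeff1 (j:ℚ) (ℓ:ℚ) hq1 hxq
      have k1 : (3*(ℓ:ℚ)+(j:ℚ)+2)/(3*(ℓ:ℚ)+3*(j:ℚ)+12)*((j:ℚ)+1)^2 * (P3 * ((j:ℚ)+2)^2)
          ≤ (3*(ℓ:ℚ)+(j:ℚ)+2)/(3*(ℓ:ℚ)+3*(j:ℚ)+12)*((j:ℚ)+1)^2 * (P1 * ((j:ℚ)+4)^2) := by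
        apply mul_le_mul_of_nonneg_left hIH13
        positivity
      have k2 := mul_le_mul_of_nonneg_right key hP1
      have hB0 : (0:ℚ) ≤ (3*(ℓ:ℚ)+(j:ℚ)-2)/(3*(ℓ:ℚ)+(j:ℚ)-4) := by
        apply div_nonneg <;> linarith
      have k3 : (3*(ℓ:ℚ)+(j:ℚ)-2)/(3*(ℓ:ℚ)+(j:ℚ)-4)*((j:ℚ)+3)^2 * (P1 * (j:ℚ)^2)
          ≤ (3*(ℓ:ℚ)+(j:ℚ)-2)/(3*(ℓ:ℚ)+(j:ℚ)-4)*((j:ℚ)+3)^2 * (Pm * ((j:ℚ)+2)^2) := by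
        apply mul_le_mul_of_nonneg_left hIHm
        positivity
      refine le_of_mul_le_mul_right ?_ hp2
      have eA2 : (3*(ℓ:ℚ)+((j:ℚ)+2))/(3*(ℓ:ℚ)+3*((j:ℚ)+2)+6) = (3*(ℓ:ℚ)+(j:ℚ)+2)/(3*(ℓ:ℚ)+3*(j:ℚ)+12) := by
        ring_nf
      have eB2 : (3*(ℓ:ℚ)+((j:ℚ)+2)-2)/(3*(ℓ:ℚ)+((j:ℚ)+2)-4) = (3*(ℓ:ℚ)+(j:ℚ))/(3*(ℓ:ℚ)+(j:ℚ)-2) := by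
        ring_nf
      rw [eA2, eB2]
      linarith [k1, k2, k3]

lemma latticeP_adj (n ℓ : ℕ) (j : ℕ) (hj : j + 2 ≤ ℓ) (hl : ℓ ≤ 2*n) :
    latticeP n ℓ ((j:ℤ)+2) / ((j:ℚ)+3)^2 ≤ latticeP n ℓ (j:ℤ) / ((j:ℚ)+1)^2 :=
  latticeP_adj_aux n (2*n) ℓ (by omega) j hj hl

lemma latticeP_chain (n ℓ : ℕ) (hl : ℓ ≤ 2*n) : ∀ i j : ℕ, j + 2*i + 2 ≤ ℓ →
    latticeP n ℓ ((j:ℤ) + 2*(i:ℤ) + 2) / ((j:ℚ) + 2*(i:ℚ) + 3)^2 ≤ latticeP n ℓ (j:ℤ) / ((j:ℚ)+1)^2 := by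
  intro i
  induction i with
  | zero =>
    intro j h
    have := latticeP_adj n ℓ j (by omega) hl
    convert this using 3 <;> push_cast <;> ring
  | succ i ih =>
    intro j h
    have h1 := ih (j+2) (by omega)
    have h2 := latticeP_adj n ℓ j (by omega) hl
    have i1 : ((j+2:ℕ):ℤ) + 2*(i:ℤ) + 2 = (j:ℤ) + 2*((i+1:ℕ):ℤ) + 2 := by push_cast; ring
    have i2 : ((j+2:ℕ):ℚ) + 2*(i:ℚ) + 3 = (j:ℚ) + 2*((i+1:ℕ):ℚ) + 3 := by push_cast; ring
    have i3 : ((j+2:ℕ):ℤ) = (j:ℤ) + 2 := by push_cast; ring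
    have i4 : ((j+2:ℕ):ℚ) + 1 = (j:ℚ) + 3 := by push_cast; ring
    rw [i1, i2, i3, i4] at h1
    exact le_trans h1 h2

theorem latticeP_ratio_monotone (n : ℕ) (hn : 1 ≤ n) (j k ℓ : ℕ)
    (hjk : j < k) (hkl : k ≤ ℓ) (hl : ℓ ≤ 2 * n) (hpar : (k - j) % 2 = 0) :
    latticeP n ℓ (k : ℤ) / ((k : ℚ) + 1) ^ 2 ≤ latticeP n ℓ (j : ℤ) / ((j : ℚ) + 1) ^ 2 := by
  obtain ⟨i, rfl⟩ : ∃ i, k = j + 2*i + 2 := ⟨(k - j - 2)/2, by omega⟩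
  have := latticeP_chain n ℓ hl i j (by omega)
  have i1 : ((j + 2*i + 2 : ℕ):ℤ) = (j:ℤ) + 2*(i:ℤ) + 2 := by push_cast; ring
  have i2 : ((j + 2*i + 2 : ℕ):ℚ) + 1 = (j:ℚ) + 2*(i:ℚ) + 3 := by push_cast; ring
  rw [i1, i2]
  exact this
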